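/- Let A be a nonnegative, nonzero n×n tubal matrix that admits a positive left t-eigenvector Y (Aᵀ * Y = ρ(A) Y, with each component of Y nonnegative and nonzero). If X is a nonzero real tubal vector such that A * X − ρ(A) X is entrywise nonnegative, then A * X = ρ(A) X. -/

import Mathlib

open Finset

/-- The t-product (circular convolution) of real tubal scalars of length `p`. -/
def tConv {p : ℕ} (a b : Fin p → ℝ) : Fin p → ℝ :=
  fun i => ∑ j : Fin p, a j * b (i - j)

/-- The t-product (circular convolution) of complex tubal scalars of length `p`. -/
noncomputable def tConvC {p : ℕ} (a b : Fin p → ℂ) : Fin p → ℂ :=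
  fun i => ∑ j : Fin p, a j * b (i - j)

/-- A tubal scalar is nonnegative if every entry is nonnegative. -/
def TNonneg {p : ℕ} (a : Fin p → ℝ) : Prop := ∀ i, 0 ≤ a i

/-- A tubal scalar is positive if it is nonnegative and not identically zero. -/
def TPos {p : ℕ} (a : Fin p → ℝ) : Prop := TNonneg a ∧ a ≠ 0

/-- A tubal scalar is strongly positive if every entry is strictly positive. -/
def TSPos {p : ℕ} (a : Fin p → ℝ) : Prop := ∀ i, 0 < a i

/-- The product of a tubal matrix and a tubal vector: `(A * X)_i = Σ_j a_{ij} * x_j`. -/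
def tMatVec {n p : ℕ} (A : Fin n → Fin n → Fin p → ℝ) (X : Fin n → Fin p → ℝ) :
    Fin n → Fin p → ℝ :=
  fun i => ∑ j : Fin n, tConv (A i j) (X j)

/-- A tubal matrix is reducible if some nonempty proper index set `I` satisfies
`a_{ij} = 0` for all `i ∈ I`, `j ∉ I`. -/
def TReducible {n p : ℕ} (A : Fin n → Fin n → Fin p → ℝ) : Prop :=
  ∃ I : Finset (Fin n), I.Nonempty ∧ I ≠ Finset.univ ∧ ∀ i ∈ I, ∀ j ∉ I, A i j = 0

/-- The t-spectrum of a real tubal matrix: complex `λ` with `A * X = λ X` for some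
nonzero complex tubal vector `X`. -/
def tSpec {n p : ℕ} (A : Fin n → Fin n → Fin p → ℝ) : Set ℂ :=
  {l | ∃ X : Fin n → Fin p → ℂ, X ≠ 0 ∧
    (fun i => ∑ j : Fin n, tConvC (fun k => (A i j k : ℂ)) (X j)) = l • X}

/-- The spectral radius over all t-eigenvalues. -/
noncomputable def tRho {n p : ℕ} (A : Fin n → Fin n → Fin p → ℝ) : ℝ :=
  sSup ((fun z : ℂ => ‖z‖) '' tSpec A)

/-- The transpose of a tubal scalar: keep the first entry, reverse entries 2 through p. -/
def tTrans {p : ℕ} (a : Fin p → ℝ) : Fin p → ℝ := fun i => a (-i)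

/-- The transpose of a tubal matrix: `(Aᵀ)_{ij} = (a_{ji})ᵀ`. -/
def tMatTrans {n p : ℕ} (A : Fin n → Fin n → Fin p → ℝ) : Fin n → Fin n → Fin p → ℝ :=
  fun i j => tTrans (A j i)

lemma sum_tConv {p : ℕ} [NeZero p] (a b : Fin p → ℝ) :
    ∑ k, tConv a b k = (∑ k, a k) * (∑ k, b k) := by
  unfold tConv
  rw [Finset.sum_comm, Finset.sum_mul]
  refine Finset.sum_congr rfl fun j _ => ?_
  rw [← Finset.mul_sum]
  congr 1
  exact Fintype.sum_equiv (Equiv.subRight j) _ _ (fun k => rfl)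

lemma sum_tTrans {p : ℕ} [NeZero p] (a : Fin p → ℝ) :
    ∑ k, tTrans a k = ∑ k, a k :=
  Fintype.sum_equiv (Equiv.neg (Fin p)) _ _ (fun k => rfl)

theorem eig_of_subinvariant {n p : ℕ} (A : Fin n → Fin n → Fin p → ℝ)
    (hA : ∀ i j, TNonneg (A i j)) (hA0 : A ≠ 0)
    (Y : Fin n → Fin p → ℝ) (hY : ∀ i, TPos (Y i))
    (hYeig : tMatVec (tMatTrans A) Y = fun i => tRho A • Y i)
    (X : Fin n → Fin p → ℝ) (hX0 : X ≠ 0)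
    (hsub : ∀ i, TNonneg (fun k => tMatVec A X i k - tRho A • X i k)) :
    tMatVec A X = fun i => tRho A • X i := by
  rcases Nat.eq_zero_or_pos p with hp | hp
  · subst hp; funext i k; exact k.elim0
  haveI : NeZero p := ⟨hp.ne'⟩
  set ρ := tRho A with hρ
  set y : Fin n → ℝ := fun i => ∑ k, Y i k with hy
  set x : Fin n → ℝ := fun i => ∑ k, X i k with hx
  set a : Fin n → Fin n → ℝ := fun i j => ∑ k, A i j k with ha
  have hypos : ∀ i, 0 < y i := by
    intro i
    obtain ⟨hnn, hne⟩ := hY i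
    have hk : ∃ k, Y i k ≠ 0 := by
      by_contra h; push_neg at h; exact hne (funext h)
    obtain ⟨k, hk⟩ := hk
    exact Finset.sum_pos' (fun k _ => hnn k)
      ⟨k, Finset.mem_univ k, lt_of_le_of_ne (hnn k) (Ne.symm hk)⟩
  -- scalar left eigenvector equation
  have heig : ∀ i, ∑ j, a j i * y j = ρ * y i := by
    intro i
    have h1 := congrFun hYeig i
    have h2 : ∑ j, (∑ k, tConv (tTrans (A j i)) (Y j) k) = ∑ k, (ρ • Y i) k := by
      rw [← h1]
      simp only [tMatVec, tMatTrans, Finset.sum_apply]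
      rw [Finset.sum_comm]
    calc ∑ j, a j i * y j
        = ∑ j, ∑ k, tConv (tTrans (A j i)) (Y j) k := by
          refine Finset.sum_congr rfl fun j _ => ?_
          rw [sum_tConv, sum_tTrans]
      _ = ∑ k, (ρ • Y i) k := h2
      _ = ρ * y i := by
          simp only [Pi.smul_apply, smul_eq_mul, ← Finset.mul_sum]; rfl
  -- scalar subinvariance
  set z : Fin n → ℝ := fun i => ∑ k, (tMatVec A X i k - ρ • X i k) with hz
  have hznn : ∀ i, 0 ≤ z i := fun i => Finset.sum_nonneg fun k _ => hsub i k
  have hzval : ∀ i, z i = ∑ j, a i j * x j - ρ * x i := by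
    intro i
    show ∑ k, (tMatVec A X i k - ρ • X i k) = _
    rw [Finset.sum_sub_distrib]
    congr 1
    · simp only [tMatVec, Finset.sum_apply]
      rw [Finset.sum_comm]
      exact Finset.sum_congr rfl fun j _ => sum_tConv _ _
    · simp only [smul_eq_mul, ← Finset.mul_sum]; rfl
  have key : ∀ i, y i * z i = (∑ j, y i * (a i j * x j)) - ρ * (y i * x i) := by
    intro i
    rw [hzval i, mul_sub, Finset.mul_sum]
    congr 1
    ring
  have hsum0 : ∑ i, y i * z i = 0 := by
    have e1 : ∑ i, y i * z i = (∑ j, ρ * (y j * x j)) - ∑ i, ρ * (y i * x i) := by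
      simp_rw [key]
      rw [Finset.sum_sub_distrib, Finset.sum_comm]
      congr 1
      refine Finset.sum_congr rfl fun j _ => ?_
      calc ∑ i, y i * (a i j * x j) = (∑ i, a i j * y i) * x j := by
            rw [Finset.sum_mul]; exact Finset.sum_congr rfl fun i _ => by ring
        _ = ρ * (y j * x j) := by rw [heig j]; ring
    rw [e1]
    exact sub_self _
  have hz0 : ∀ i, z i = 0 := by
    intro i
    have h := (Finset.sum_eq_zero_iff_of_nonneg
      (fun i _ => mul_nonneg (hypos i).le (hznn i))).mp hsum0 i (Finset.mem_univ i)
    have := hypos i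
    nlinarith [hznn i]
  funext i k
  have h := (Finset.sum_eq_zero_iff_of_nonneg (fun k _ => hsub i k)).mp (hz0 i)
    k (Finset.mem_univ k)
  simpa [sub_eq_zero] using h
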